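/- arXiv:2006.03518 — 2 statements merged into one kernel-verified Lean document; each statement's English description precedes it below -/
import Mathlib

section
/- Positivity and discrete mass conservation for the discrete time-fractional Fokker–Planck scheme: Under the hypotheses ensuring existence (g C¹ in q satisfying (G1), given grid functions (Uⁿ)_{n=0}^{N−1}, Δt sufficiently small), if the initial datum satisfies M⁰_{i,j} ≥ 0 for all (i,j) and (M⁰, 1̄)₂ = 1, then the solution (Mⁿ)_{n=0}^N of the scheme D^α_{Δt}M^{n+1}_{i,j} − (Δ_hM^{n+1})_{i,j} − B_{i,j}(Uⁿ, M^{n+1}) = 0 (n = 0,…,N−1) satisfies Mⁿ_{i,j} ≥ 0 for all (i,j) and (Mⁿ, 1̄)₂ = 1 for every n = 0,…,N. -/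
open Real Finset

noncomputable section

/-- forward L1 coefficients `c_k^n` -/
def cF (α : ℝ) (n k : ℕ) : ℝ :=
  if k = 0 then (n : ℝ) ^ (1 - α) - ((n : ℝ) - 1) ^ (1 - α)
  else 2 * ((n : ℝ) - k) ^ (1 - α) - ((n : ℝ) + 1 - k) ^ (1 - α) - ((n : ℝ) - 1 - k) ^ (1 - α)

/-- backward L1 coefficients `c̄_n^k` (with horizon `N`) -/
def cB (α : ℝ) (N n k : ℕ) : ℝ :=
  if k = N then ((N : ℝ) - n) ^ (1 - α) - ((N : ℝ) - 1 - n) ^ (1 - α)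
  else 2 * ((k : ℝ) - n) ^ (1 - α) - ((k : ℝ) + 1 - n) ^ (1 - α) - ((k : ℝ) - 1 - n) ^ (1 - α)

/-- `ρ_α = Γ(2-α) Δt^α` -/
def rhoA (α Δt : ℝ) : ℝ := Real.Gamma (2 - α) * Δt ^ α

/-- discrete forward Caputo derivative (L1 scheme) -/
def DF (α Δt : ℝ) (w : ℕ → ℝ) (n : ℕ) : ℝ :=
  (rhoA α Δt)⁻¹ * (w n - ∑ k ∈ Finset.range n, cF α n k * w k)

/-- discrete backward Caputo derivative (L1 scheme) -/
def DB (α Δt : ℝ) (N : ℕ) (w : ℕ → ℝ) (n : ℕ) : ℝ :=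
  (rhoA α Δt)⁻¹ * (w n - ∑ k ∈ Finset.Icc (n + 1) N, cB α N n k * w k)

/-- grid functions on the uniform periodic grid of the 2-torus -/
abbrev GridFun (Nh : ℕ) := ZMod Nh → ZMod Nh → ℝ

/-- mesh step `h = 1/N_h` -/
def hstep (Nh : ℕ) : ℝ := (Nh : ℝ)⁻¹

/-- grid point `x_{i,j} = (i h, j h)` -/
def gridPt (Nh : ℕ) (i j : ZMod Nh) : ℝ × ℝ :=
  ((i.val : ℝ) * hstep Nh, (j.val : ℝ) * hstep Nh)

/-- forward difference in the first variable -/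
def D1p (Nh : ℕ) (U : GridFun Nh) (i j : ZMod Nh) : ℝ := (U (i + 1) j - U i j) / hstep Nh

/-- forward difference in the second variable -/
def D2p (Nh : ℕ) (U : GridFun Nh) (i j : ZMod Nh) : ℝ := (U i (j + 1) - U i j) / hstep Nh

/-- the discrete gradient `[D_h U]_{i,j} ∈ ℝ⁴` -/
def Dh (Nh : ℕ) (U : GridFun Nh) (i j : ZMod Nh) : Fin 4 → ℝ :=
  ![D1p Nh U i j, D1p Nh U (i - 1) j, D2p Nh U i j, D2p Nh U i (j - 1)]

/-- five point discrete Laplacian -/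
def lapl (Nh : ℕ) (U : GridFun Nh) (i j : ZMod Nh) : ℝ :=
  -(4 * U i j - U (i + 1) j - U (i - 1) j - U i (j + 1) - U i (j - 1)) / (hstep Nh) ^ 2

/-- the scalar product `(U,V)₂ = h² Σ_{i,j} U_{i,j} V_{i,j}` -/
def inner2 (Nh : ℕ) [NeZero Nh] (U V : GridFun Nh) : ℝ :=
  (hstep Nh) ^ 2 * ∑ i : ZMod Nh, ∑ j : ZMod Nh, U i j * V i j

/-- the set `𝒦_h` of discrete probability measures -/
def Kh (Nh : ℕ) [NeZero Nh] : Set (GridFun Nh) :=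
  {M | (∀ i j, 0 ≤ M i j) ∧ inner2 Nh M (fun _ _ => 1) = 1}

/-- partial derivative `∂_{q_k} g(q)` -/
def gq (g : (Fin 4 → ℝ) → ℝ) (q : Fin 4 → ℝ) (k : Fin 4) : ℝ :=
  fderiv ℝ g q (Pi.single k 1)

/-- (G1): `g` nonincreasing in `q₁, q₃` and nondecreasing in `q₂, q₄` -/
def G1 (g : (Fin 4 → ℝ) → ℝ) : Prop :=
  (∀ q : Fin 4 → ℝ, Antitone fun s => g (Function.update q 0 s)) ∧
  (∀ q : Fin 4 → ℝ, Monotone fun s => g (Function.update q 1 s)) ∧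
  (∀ q : Fin 4 → ℝ, Antitone fun s => g (Function.update q 2 s)) ∧
  (∀ q : Fin 4 → ℝ, Monotone fun s => g (Function.update q 3 s))

/-- the discrete transport operator `𝓑_{i,j}(U,M)` -/
def Bop (Nh : ℕ) (g : ZMod Nh → ZMod Nh → (Fin 4 → ℝ) → ℝ) (U M : GridFun Nh)
    (i j : ZMod Nh) : ℝ :=
  (hstep Nh)⁻¹ *
    (M i j * gq (g i j) (Dh Nh U i j) 0 - M (i - 1) j * gq (g (i - 1) j) (Dh Nh U (i - 1) j) 0
     + M (i + 1) j * gq (g (i + 1) j) (Dh Nh U (i + 1) j) 1 - M i j * gq (g i j) (Dh Nh U i j) 1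
     + M i j * gq (g i j) (Dh Nh U i j) 2 - M i (j - 1) * gq (g i (j - 1)) (Dh Nh U i (j - 1)) 2
     + M i (j + 1) * gq (g i (j + 1)) (Dh Nh U i (j + 1)) 3 - M i j * gq (g i j) (Dh Nh U i j) 3)


lemma cF_nonneg {α : ℝ} (hα : α ∈ Set.Ioo (0:ℝ) 1) {n k : ℕ} (hk : k ≤ n) :
    0 ≤ cF α (n+1) k := by
  obtain ⟨hα0, hα1⟩ := hα
  have hp0 : (0:ℝ) < 1 - α := by linarith
  rcases Nat.eq_zero_or_pos k with rfl | hkpos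
  · simp only [cF, if_pos rfl]
    push_cast
    have h1 : ((n:ℝ)+1) - 1 = (n:ℝ) := by ring
    rw [h1]
    have := Real.rpow_le_rpow (x := (n:ℝ)) (y := (n:ℝ)+1) (z := 1-α)
      (Nat.cast_nonneg n) (by linarith) hp0.le
    linarith
  · have hk0 : k ≠ 0 := Nat.pos_iff_ne_zero.mp hkpos
    simp only [cF, if_neg hk0]
    have hkn : (k:ℝ) ≤ n := Nat.cast_le.mpr hk
    set b : ℝ := ((n:ℝ) + 1) - k with hb
    have hb1 : 1 ≤ b := by simp only [hb]; linarith
    have hcc := (Real.concaveOn_rpow hp0.le (by linarith)).2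
      (show b - 1 ∈ Set.Ici (0:ℝ) by simp only [Set.mem_Ici]; linarith)
      (show b + 1 ∈ Set.Ici (0:ℝ) by simp only [Set.mem_Ici]; linarith)
      (show (0:ℝ) ≤ 1/2 by norm_num) (show (0:ℝ) ≤ 1/2 by norm_num)
      (show (1:ℝ)/2 + 1/2 = 1 by norm_num)
    have he : (1/2 : ℝ) • (b-1) + (1/2 : ℝ) • (b+1) = b := by
      simp only [smul_eq_mul]; ring
    rw [he] at hcc
    simp only [smul_eq_mul] at hcc
    push_cast
    have h1 : (n:ℝ)+1+1-k = b + 1 := by simp only [hb]; ring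
    have h2 : (n:ℝ)+1-1-k = b - 1 := by simp only [hb]; ring
    have h3 : (n:ℝ)+1-k = b := by simp only [hb]
    rw [h1, h2, h3]
    linarith

lemma cF_sum {α : ℝ} (hα : α ∈ Set.Ioo (0:ℝ) 1) (n : ℕ) :
    ∑ k ∈ Finset.range (n+1), cF α (n+1) k = 1 := by
  obtain ⟨hα0, hα1⟩ := hα
  have hp0 : (1:ℝ) - α ≠ 0 := by intro h; linarith [h]
  set G : ℕ → ℝ := fun k => ((n:ℝ) + 1 - k) ^ (1-α) - ((n:ℝ) + 2 - k) ^ (1-α) with hG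
  rw [Finset.sum_range_succ']
  have hstep : ∀ i ∈ Finset.range n, cF α (n+1) (i+1) = G (i+1) - G (i+2) := by
    intro i _
    simp only [cF, if_neg (Nat.succ_ne_zero i), hG]
    push_cast
    ring_nf
  rw [Finset.sum_congr rfl hstep]
  have htel : ∑ i ∈ Finset.range n, (G (i+1) - G (i+2)) = G 1 - G (n+1) :=
    Finset.sum_range_sub' (fun i => G (i+1)) n
  rw [htel]
  have hG1 : G 1 = (n:ℝ)^(1-α) - ((n:ℝ)+1)^(1-α) := by
    simp only [hG]
    push_cast
    rw [show (n:ℝ)+1-1 = (n:ℝ) by ring, show (n:ℝ)+2-1 = (n:ℝ)+1 by ring]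
  have hGn : G (n+1) = -1 := by
    simp only [hG]
    push_cast
    have h0 : (n:ℝ)+1-((n:ℝ)+1) = 0 := by ring
    have h1 : (n:ℝ)+2-((n:ℝ)+1) = 1 := by ring
    rw [h0, h1, Real.zero_rpow hp0, Real.one_rpow]
    ring
  have hc0 : cF α (n+1) 0 = ((n:ℝ)+1)^(1-α) - (n:ℝ)^(1-α) := by
    simp only [cF, if_pos rfl]
    push_cast
    norm_num
  rw [hG1, hGn, hc0]
  ring


lemma sum_shift {Nh : ℕ} [NeZero Nh] (f : ZMod Nh → ZMod Nh → ℝ) (c d : ZMod Nh) :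
    (∑ i : ZMod Nh, ∑ j : ZMod Nh, f (i + c) (j + d))
      = ∑ i : ZMod Nh, ∑ j : ZMod Nh, f i j := by
  have h1 : ∀ a : ZMod Nh, (∑ j : ZMod Nh, f a (j + d)) = ∑ j : ZMod Nh, f a j := by
    intro a
    exact Fintype.sum_equiv (Equiv.addRight d) _ _ (fun j => rfl)
  simp only [h1]
  exact Fintype.sum_equiv (Equiv.addRight c) _ _ (fun i => rfl)

lemma sum_lapl {Nh : ℕ} [NeZero Nh] (f : GridFun Nh) :
    (∑ i : ZMod Nh, ∑ j : ZMod Nh, lapl Nh f i j) = 0 := by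
  have e : ∀ i j : ZMod Nh, lapl Nh f i j
      = (f (i+1) j + f (i-1) j + f i (j+1) + f i (j-1) - 4 * f i j) / (hstep Nh)^2 := by
    intro i j; simp only [lapl]; ring
  simp only [e]
  simp only [← Finset.sum_div, Finset.sum_sub_distrib, Finset.sum_add_distrib, ← Finset.mul_sum]
  have s1 : (∑ i : ZMod Nh, ∑ j : ZMod Nh, f (i+1) j) = ∑ i : ZMod Nh, ∑ j : ZMod Nh, f i j := by
    simpa using sum_shift f 1 0
  have s2 : (∑ i : ZMod Nh, ∑ j : ZMod Nh, f (i-1) j) = ∑ i : ZMod Nh, ∑ j : ZMod Nh, f i j := by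
    simpa [sub_eq_add_neg] using sum_shift f (-1) 0
  have s3 : (∑ i : ZMod Nh, ∑ j : ZMod Nh, f i (j+1)) = ∑ i : ZMod Nh, ∑ j : ZMod Nh, f i j := by
    simpa using sum_shift f 0 1
  have s4 : (∑ i : ZMod Nh, ∑ j : ZMod Nh, f i (j-1)) = ∑ i : ZMod Nh, ∑ j : ZMod Nh, f i j := by
    simpa [sub_eq_add_neg] using sum_shift f 0 (-1)
  rw [s1, s2, s3, s4]
  ring

lemma sum_Bop {Nh : ℕ} [NeZero Nh] (g : ZMod Nh → ZMod Nh → (Fin 4 → ℝ) → ℝ)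
    (U M : GridFun Nh) :
    (∑ i : ZMod Nh, ∑ j : ZMod Nh, Bop Nh g U M i j) = 0 := by
  set P : GridFun Nh := fun i j => M i j * gq (g i j) (Dh Nh U i j) 0 with hP
  set Q : GridFun Nh := fun i j => M i j * gq (g i j) (Dh Nh U i j) 1 with hQ
  set R : GridFun Nh := fun i j => M i j * gq (g i j) (Dh Nh U i j) 2 with hR
  set S : GridFun Nh := fun i j => M i j * gq (g i j) (Dh Nh U i j) 3 with hS
  have e : ∀ i j : ZMod Nh, Bop Nh g U M i j
      = (hstep Nh)⁻¹ * (P i j - P (i-1) j + (Q (i+1) j - Q i j)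
          + (R i j - R i (j-1)) + (S i (j+1) - S i j)) := by
    intro i j; simp only [Bop, hP, hQ, hR, hS]; ring
  simp only [e, ← Finset.mul_sum]
  simp only [Finset.sum_add_distrib, Finset.sum_sub_distrib]
  have p1 : (∑ i : ZMod Nh, ∑ j : ZMod Nh, P (i-1) j) = ∑ i : ZMod Nh, ∑ j : ZMod Nh, P i j := by
    simpa [sub_eq_add_neg] using sum_shift P (-1) 0
  have q1 : (∑ i : ZMod Nh, ∑ j : ZMod Nh, Q (i+1) j) = ∑ i : ZMod Nh, ∑ j : ZMod Nh, Q i j := by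
    simpa using sum_shift Q 1 0
  have r1 : (∑ i : ZMod Nh, ∑ j : ZMod Nh, R i (j-1)) = ∑ i : ZMod Nh, ∑ j : ZMod Nh, R i j := by
    simpa [sub_eq_add_neg] using sum_shift R 0 (-1)
  have t1 : (∑ i : ZMod Nh, ∑ j : ZMod Nh, S i (j+1)) = ∑ i : ZMod Nh, ∑ j : ZMod Nh, S i j := by
    simpa using sum_shift S 0 1
  rw [p1, q1, r1, t1]
  ring

lemma gq_hasDerivAt (g : (Fin 4 → ℝ) → ℝ) (hg : ContDiff ℝ 1 g) (q : Fin 4 → ℝ) (k : Fin 4) :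
    HasDerivAt (fun s => g (Function.update q k s)) (gq g q k) (q k) := by
  have hL : HasDerivAt (fun s : ℝ => Function.update q k s) (Pi.single k 1) (q k) := by
    rw [hasDerivAt_pi]
    intro i
    by_cases hik : i = k
    · subst hik
      have h1 : (fun s : ℝ => Function.update q i s i) = fun s => s := by
        funext s; simp
      rw [h1, Pi.single_eq_same]
      exact hasDerivAt_id _
    · have h1 : (fun s : ℝ => Function.update q k s i) = fun _ => q i := by
        funext s; rw [Function.update_apply, if_neg hik]
      rw [h1, Pi.single_eq_of_ne hik]
      exact hasDerivAt_const _ _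
  have hgf : HasFDerivAt g (fderiv ℝ g q) (Function.update q k (q k)) := by
    rw [Function.update_eq_self]
    exact (hg.differentiable one_ne_zero q).hasFDerivAt
  simpa [Function.comp_def, gq] using hgf.comp_hasDerivAt (q k) hL

lemma hasDerivAt_antitone_nonpos {f : ℝ → ℝ} {d x : ℝ} (hf : HasDerivAt f d x)
    (ha : Antitone f) : d ≤ 0 := by
  have ht : Filter.Tendsto (slope f x) (nhdsWithin x (Set.Ioi x)) (nhds d) :=
    (hasDerivAt_iff_tendsto_slope.mp hf).mono_left
      (nhdsWithin_mono x fun y hy => ne_of_gt hy)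
  refine le_of_tendsto ht ?_
  filter_upwards [self_mem_nhdsWithin] with y hy
  have hxy : x < y := hy
  rw [slope_def_field]
  apply div_nonpos_of_nonpos_of_nonneg
  · exact sub_nonpos.mpr (ha hxy.le)
  · exact sub_nonneg.mpr hxy.le

lemma hasDerivAt_monotone_nonneg {f : ℝ → ℝ} {d x : ℝ} (hf : HasDerivAt f d x)
    (ha : Monotone f) : 0 ≤ d := by
  have ht : Filter.Tendsto (slope f x) (nhdsWithin x (Set.Ioi x)) (nhds d) :=
    (hasDerivAt_iff_tendsto_slope.mp hf).mono_left
      (nhdsWithin_mono x fun y hy => ne_of_gt hy)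
  refine ge_of_tendsto ht ?_
  filter_upwards [self_mem_nhdsWithin] with y hy
  have hxy : x < y := hy
  rw [slope_def_field]
  apply div_nonneg
  · exact sub_nonneg.mpr (ha hxy.le)
  · exact sub_nonneg.mpr hxy.le

lemma gq_nonpos {g : (Fin 4 → ℝ) → ℝ} (hg : ContDiff ℝ 1 g) (q : Fin 4 → ℝ) {k : Fin 4}
    (ha : Antitone fun s => g (Function.update q k s)) : gq g q k ≤ 0 :=
  hasDerivAt_antitone_nonpos (gq_hasDerivAt g hg q k) ha

lemma gq_nonneg {g : (Fin 4 → ℝ) → ℝ} (hg : ContDiff ℝ 1 g) (q : Fin 4 → ℝ) {k : Fin 4}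
    (ha : Monotone fun s => g (Function.update q k s)) : 0 ≤ gq g q k :=
  hasDerivAt_monotone_nonneg (gq_hasDerivAt g hg q k) ha

set_option maxHeartbeats 2000000

/-- Positivity and discrete mass conservation for the discrete time-fractional
Fokker-Planck scheme, for `Δt` sufficiently small. -/
theorem FP_positivity_mass_conservation (α : ℝ) (hα : α ∈ Set.Ioo (0 : ℝ) 1)
    (N Nh : ℕ) [NeZero Nh]
    (g : ZMod Nh → ZMod Nh → (Fin 4 → ℝ) → ℝ)
    (hgC1 : ∀ i j, ContDiff ℝ 1 (g i j)) (hg1 : ∀ i j, G1 (g i j))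
    (U : ℕ → GridFun Nh) :
    ∃ δ > 0, ∀ Δt : ℝ, 0 < Δt → Δt < δ →
      ∀ M : ℕ → GridFun Nh,
        (∀ i j, 0 ≤ M 0 i j) → inner2 Nh (M 0) (fun _ _ => 1) = 1 →
        (∀ n < N, ∀ i j,
          DF α Δt (fun m => M m i j) (n + 1) - lapl Nh (M (n + 1)) i j
            - Bop Nh g (U n) (M (n + 1)) i j = 0) →
        ∀ n ≤ N, (∀ i j, 0 ≤ M n i j) ∧ inner2 Nh (M n) (fun _ _ => 1) = 1 := by
  have hα0 : (0:ℝ) < α := hα.1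
  have hα1 : α < 1 := hα.2
  have hNh : (0:ℝ) < (Nh:ℝ) := by exact_mod_cast Nat.pos_of_ne_zero (NeZero.ne Nh)
  have hh : 0 < hstep Nh := by rw [hstep]; positivity
  obtain ⟨Csum, hCsume⟩ : ∃ C : ℝ, C = ∑ n ∈ Finset.range N, ∑ i : ZMod Nh, ∑ j : ZMod Nh,
      ∑ k : Fin 4, |gq (g i j) (Dh Nh (U n) i j) k| := ⟨_, rfl⟩
  have hCsum0 : 0 ≤ Csum := by
    rw [hCsume]
    apply Finset.sum_nonneg; intro n _
    apply Finset.sum_nonneg; intro i _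
    apply Finset.sum_nonneg; intro j _
    exact Finset.sum_nonneg fun k _ => abs_nonneg _
  have habs : ∀ n, n < N → ∀ (i j : ZMod Nh) (k : Fin 4),
      |gq (g i j) (Dh Nh (U n) i j) k| ≤ Csum := by
    intro n hnN i j k
    calc |gq (g i j) (Dh Nh (U n) i j) k|
        ≤ ∑ k : Fin 4, |gq (g i j) (Dh Nh (U n) i j) k| :=
          Finset.single_le_sum (f := fun k' : Fin 4 => |gq (g i j) (Dh Nh (U n) i j) k'|)
            (fun _ _ => abs_nonneg _) (Finset.mem_univ k)
      _ ≤ ∑ j : ZMod Nh, ∑ k : Fin 4, |gq (g i j) (Dh Nh (U n) i j) k| :=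
          Finset.single_le_sum
            (f := fun j' : ZMod Nh => ∑ k : Fin 4, |gq (g i j') (Dh Nh (U n) i j') k|)
            (fun _ _ => Finset.sum_nonneg fun _ _ => abs_nonneg _) (Finset.mem_univ j)
      _ ≤ ∑ i : ZMod Nh, ∑ j : ZMod Nh, ∑ k : Fin 4, |gq (g i j) (Dh Nh (U n) i j) k| :=
          Finset.single_le_sum
            (f := fun i' : ZMod Nh => ∑ j' : ZMod Nh, ∑ k : Fin 4,
              |gq (g i' j') (Dh Nh (U n) i' j') k|)
            (fun _ _ => Finset.sum_nonneg fun _ _ => Finset.sum_nonneg fun _ _ => abs_nonneg _)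
            (Finset.mem_univ i)
      _ ≤ Csum := by
          rw [hCsume]
          exact Finset.single_le_sum
            (f := fun n' : ℕ => ∑ i' : ZMod Nh, ∑ j' : ZMod Nh, ∑ k : Fin 4,
              |gq (g i' j') (Dh Nh (U n') i' j') k|)
            (fun _ _ => Finset.sum_nonneg fun _ _ => Finset.sum_nonneg fun _ _ =>
              Finset.sum_nonneg fun _ _ => abs_nonneg _)
            (Finset.mem_range.mpr hnN)
  obtain ⟨K, hKdef⟩ : ∃ K : ℝ, K = (hstep Nh)⁻¹ * (8 * Csum) + 1 := ⟨_, rfl⟩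
  have hK1 : 1 ≤ K := by
    have h8 : 0 ≤ (hstep Nh)⁻¹ * (8 * Csum) := by
      apply mul_nonneg (inv_nonneg.mpr hh.le)
      apply mul_nonneg (by norm_num) hCsum0
    rw [hKdef]; linarith
  have hKpos : (0:ℝ) < K := lt_of_lt_of_le one_pos hK1
  have hGam : 0 < Real.Gamma (2 - α) := Real.Gamma_pos_of_pos (by linarith)
  obtain ⟨δ, hδdef⟩ : ∃ d : ℝ, d = ((Real.Gamma (2 - α) * K)⁻¹) ^ (α⁻¹) := ⟨_, rfl⟩
  have hδpos : 0 < δ := hδdef ▸ Real.rpow_pos_of_pos (inv_pos.mpr (mul_pos hGam hKpos)) _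
  refine ⟨δ, hδpos, ?_⟩
  intro Δt hΔt hΔtδ M hM0 hmass0 hscheme
  have hρ : 0 < rhoA α Δt := by
    rw [rhoA]
    exact mul_pos hGam (Real.rpow_pos_of_pos hΔt _)
  have hsmall : rhoA α Δt * K < 1 := by
    have h1 : Δt ^ α < δ ^ α := Real.rpow_lt_rpow hΔt.le hΔtδ hα0
    have h2 : δ ^ α = (Real.Gamma (2 - α) * K)⁻¹ := by
      rw [hδdef]
      
      exact Real.rpow_inv_rpow (inv_pos.mpr (mul_pos hGam hKpos)).le (ne_of_gt hα0)
    have h3 : rhoA α Δt < Real.Gamma (2 - α) * (Real.Gamma (2 - α) * K)⁻¹ := by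
      rw [rhoA, ← h2]
      exact (mul_lt_mul_iff_right₀ hGam).mpr h1
    have h4 : Real.Gamma (2 - α) * (Real.Gamma (2 - α) * K)⁻¹ = K⁻¹ := by
      rw [mul_inv, ← mul_assoc, mul_inv_cancel₀ hGam.ne', one_mul]
    have h5 : rhoA α Δt < K⁻¹ := by rw [← h4]; exact h3
    calc rhoA α Δt * K < K⁻¹ * K := mul_lt_mul_of_pos_right h5 hKpos
      _ = 1 := inv_mul_cancel₀ hKpos.ne'
  intro n
  induction n using Nat.strong_induction_on with
  | _ n ih =>
    intro hn
    cases n with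
    | zero => exact ⟨hM0, hmass0⟩
    | succ m =>
      have hmN : m < N := lt_of_lt_of_le (Nat.lt_succ_self m) hn
      have ihall : ∀ k, k ≤ m → (∀ i j, 0 ≤ M k i j) ∧
          inner2 Nh (M k) (fun _ _ => 1) = 1 := by
        intro k hk
        exact ih k (Nat.lt_succ_of_le hk) (le_trans (le_trans hk (Nat.le_succ m)) hn)
      have hh2 : ((hstep Nh)^2 : ℝ) ≠ 0 := by positivity
      have hTk : ∀ k, k ≤ m →
          (∑ i : ZMod Nh, ∑ j : ZMod Nh, M k i j) = ((hstep Nh)^2)⁻¹ := by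
        intro k hk
        have hT := (ihall k hk).2
        rw [inner2] at hT
        simp only [mul_one] at hT
        apply mul_left_cancel₀ hh2
        rw [hT, mul_inv_cancel₀ hh2]
      have hpos : ∀ i j, 0 ≤ M (m+1) i j := by
        obtain ⟨p, -, hmin⟩ := Finset.exists_min_image (Finset.univ : Finset (ZMod Nh × ZMod Nh))
          (fun p => M (m+1) p.1 p.2) ⟨(0,0), Finset.mem_univ _⟩
        obtain ⟨i0, j0⟩ := p
        have hminle : ∀ i j : ZMod Nh, M (m+1) i0 j0 ≤ M (m+1) i j :=
          fun i j => hmin (i, j) (Finset.mem_univ _)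
        suffices hmm0 : 0 ≤ M (m+1) i0 j0 by
          intro i j; exact le_trans hmm0 (hminle i j)
        by_contra hcon
        push_neg at hcon
        obtain ⟨S0, hS0e⟩ : ∃ S : ℝ, S = ∑ k ∈ Finset.range (m+1), cF α (m+1) k * M k i0 j0 := ⟨_, rfl⟩
        have hS0nn : 0 ≤ S0 := by
          rw [hS0e]
          apply Finset.sum_nonneg
          intro k hk
          have hk' : k ≤ m := Nat.lt_succ_iff.mp (Finset.mem_range.mp hk)
          exact mul_nonneg (cF_nonneg hα hk') ((ihall k hk').1 i0 j0)
        have hLpos : 0 ≤ lapl Nh (M (m+1)) i0 j0 := by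
          simp only [lapl]
          apply div_nonneg _ (sq_nonneg _)
          have h1 := hminle (i0+1) j0
          have h2 := hminle (i0-1) j0
          have h3 := hminle i0 (j0+1)
          have h4 := hminle i0 (j0-1)
          linarith
        have hsch := hscheme m hmN i0 j0
        simp only [DF] at hsch
        have hmm_eq : M (m+1) i0 j0 = S0 + rhoA α Δt *
            (lapl Nh (M (m+1)) i0 j0 + Bop Nh g (U m) (M (m+1)) i0 j0) := by
          have h1 : (rhoA α Δt)⁻¹ * (M (m+1) i0 j0 - S0)
              = lapl Nh (M (m+1)) i0 j0 + Bop Nh g (U m) (M (m+1)) i0 j0 := by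
            rw [hS0e]; linarith [hsch]
          have h2 := congrArg (fun x => rhoA α Δt * x) h1
          rw [← mul_assoc, mul_inv_cancel₀ hρ.ne', one_mul] at h2
          linarith [h2]
        obtain ⟨a0, ha0e⟩ : ∃ x : ℝ, x = gq (g i0 j0) (Dh Nh (U m) i0 j0) 0 := ⟨_, rfl⟩
        obtain ⟨b0, hb0e⟩ : ∃ x : ℝ, x = gq (g (i0-1) j0) (Dh Nh (U m) (i0-1) j0) 0 := ⟨_, rfl⟩
        obtain ⟨c0, hc0e⟩ : ∃ x : ℝ, x = gq (g (i0+1) j0) (Dh Nh (U m) (i0+1) j0) 1 := ⟨_, rfl⟩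
        obtain ⟨d0, hd0e⟩ : ∃ x : ℝ, x = gq (g i0 j0) (Dh Nh (U m) i0 j0) 1 := ⟨_, rfl⟩
        obtain ⟨e0, he0e⟩ : ∃ x : ℝ, x = gq (g i0 j0) (Dh Nh (U m) i0 j0) 2 := ⟨_, rfl⟩
        obtain ⟨f0, hf0e⟩ : ∃ x : ℝ, x = gq (g i0 (j0-1)) (Dh Nh (U m) i0 (j0-1)) 2 := ⟨_, rfl⟩
        obtain ⟨g0, hg0e⟩ : ∃ x : ℝ, x = gq (g i0 (j0+1)) (Dh Nh (U m) i0 (j0+1)) 3 := ⟨_, rfl⟩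
        obtain ⟨h0, hh0e⟩ : ∃ x : ℝ, x = gq (g i0 j0) (Dh Nh (U m) i0 j0) 3 := ⟨_, rfl⟩
        have hb0 : b0 ≤ 0 := by
          rw [hb0e]; exact gq_nonpos (hgC1 _ _) _ ((hg1 _ _).1 _)
        have hc0 : 0 ≤ c0 := by
          rw [hc0e]; exact gq_nonneg (hgC1 _ _) _ ((hg1 _ _).2.1 _)
        have hf0 : f0 ≤ 0 := by
          rw [hf0e]; exact gq_nonpos (hgC1 _ _) _ ((hg1 _ _).2.2.1 _)
        have hg0 : 0 ≤ g0 := by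
          rw [hg0e]; exact gq_nonneg (hgC1 _ _) _ ((hg1 _ _).2.2.2 _)
        have hBval : Bop Nh g (U m) (M (m+1)) i0 j0
            = (hstep Nh)⁻¹ * (M (m+1) i0 j0 * a0 - M (m+1) (i0-1) j0 * b0
              + M (m+1) (i0+1) j0 * c0 - M (m+1) i0 j0 * d0 + M (m+1) i0 j0 * e0
              - M (m+1) i0 (j0-1) * f0 + M (m+1) i0 (j0+1) * g0 - M (m+1) i0 j0 * h0) := by
          simp only [Bop, ha0e, hb0e, hc0e, hd0e, he0e, hf0e, hg0e, hh0e]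
        have hBlow : (hstep Nh)⁻¹ * (M (m+1) i0 j0 * (a0 - b0 + c0 - d0 + e0 - f0 + g0 - h0))
            ≤ Bop Nh g (U m) (M (m+1)) i0 j0 := by
          rw [hBval]
          apply mul_le_mul_of_nonneg_left _ (inv_nonneg.mpr hh.le)
          have n1 : M (m+1) i0 j0 * (-b0) ≤ M (m+1) (i0-1) j0 * (-b0) :=
            mul_le_mul_of_nonneg_right (hminle _ _) (neg_nonneg.mpr hb0)
          have n2 : M (m+1) i0 j0 * c0 ≤ M (m+1) (i0+1) j0 * c0 :=
            mul_le_mul_of_nonneg_right (hminle _ _) hc0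
          have n3 : M (m+1) i0 j0 * (-f0) ≤ M (m+1) i0 (j0-1) * (-f0) :=
            mul_le_mul_of_nonneg_right (hminle _ _) (neg_nonneg.mpr hf0)
          have n4 : M (m+1) i0 j0 * g0 ≤ M (m+1) i0 (j0+1) * g0 :=
            mul_le_mul_of_nonneg_right (hminle _ _) hg0
          nlinarith [n1, n2, n3, n4]
        have hEb : a0 - b0 + c0 - d0 + e0 - f0 + g0 - h0 ≤ 8 * Csum := by
          have xa := abs_le.mp (show |a0| ≤ Csum by rw [ha0e]; exact habs m hmN i0 j0 0)
          have xb := abs_le.mp (show |b0| ≤ Csum by rw [hb0e]; exact habs m hmN _ _ 0)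
          have xc := abs_le.mp (show |c0| ≤ Csum by rw [hc0e]; exact habs m hmN _ _ 1)
          have xd := abs_le.mp (show |d0| ≤ Csum by rw [hd0e]; exact habs m hmN _ _ 1)
          have xe := abs_le.mp (show |e0| ≤ Csum by rw [he0e]; exact habs m hmN _ _ 2)
          have xf := abs_le.mp (show |f0| ≤ Csum by rw [hf0e]; exact habs m hmN _ _ 2)
          have xg := abs_le.mp (show |g0| ≤ Csum by rw [hg0e]; exact habs m hmN _ _ 3)
          have xh := abs_le.mp (show |h0| ≤ Csum by rw [hh0e]; exact habs m hmN _ _ 3)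
          linarith [xa.1, xa.2, xb.1, xb.2, xc.1, xc.2, xd.1, xd.2, xe.1, xe.2,
            xf.1, xf.2, xg.1, xg.2, xh.1, xh.2]
        have hcomb : M (m+1) i0 j0 * (8 * Csum)
            ≤ M (m+1) i0 j0 * (a0 - b0 + c0 - d0 + e0 - f0 + g0 - h0) :=
          mul_le_mul_of_nonpos_left hEb hcon.le
        have hstep2 : (hstep Nh)⁻¹ * (M (m+1) i0 j0 * (8 * Csum))
            ≤ lapl Nh (M (m+1)) i0 j0 + Bop Nh g (U m) (M (m+1)) i0 j0 := by
          have hx := mul_le_mul_of_nonneg_left hcomb (inv_nonneg.mpr hh.le)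
          linarith [hBlow, hLpos, hx]
        have hij : rhoA α Δt * ((hstep Nh)⁻¹ * (M (m+1) i0 j0 * (8 * Csum)))
            ≤ M (m+1) i0 j0 := by
          have hx := mul_le_mul_of_nonneg_left hstep2 hρ.le
          linarith [hS0nn, hx, hmm_eq]
        have hfin : rhoA α Δt * ((hstep Nh)⁻¹ * (M (m+1) i0 j0 * (8 * Csum)))
            = M (m+1) i0 j0 * (rhoA α Δt * ((hstep Nh)⁻¹ * (8 * Csum))) := by ring
        rw [hfin] at hij
        have hlt : rhoA α Δt * ((hstep Nh)⁻¹ * (8 * Csum)) < 1 := by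
          have hKx : rhoA α Δt * K
              = rhoA α Δt * ((hstep Nh)⁻¹ * (8 * Csum)) + rhoA α Δt := by
            rw [hKdef]; ring
          linarith [hsmall, hρ]
        nlinarith [hij, mul_pos (neg_pos.mpr hcon) (sub_pos.mpr hlt)]
      refine ⟨hpos, ?_⟩
      have hL0 : (∑ i : ZMod Nh, ∑ j : ZMod Nh, lapl Nh (M (m+1)) i j) = 0 := sum_lapl _
      have hB0 : (∑ i : ZMod Nh, ∑ j : ZMod Nh, Bop Nh g (U m) (M (m+1)) i j) = 0 :=
        sum_Bop _ _ _
      have hDF : ∀ i j : ZMod Nh, DF α Δt (fun t => M t i j) (m+1)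
          = lapl Nh (M (m+1)) i j + Bop Nh g (U m) (M (m+1)) i j := by
        intro i j; have := hscheme m hmN i j; linarith
      have hDFsum : (∑ i : ZMod Nh, ∑ j : ZMod Nh, DF α Δt (fun t => M t i j) (m+1)) = 0 := by
        simp only [hDF, Finset.sum_add_distrib]
        rw [hL0, hB0]; ring
      simp only [DF, ← Finset.mul_sum] at hDFsum
      have hsum0 : (∑ i : ZMod Nh, ∑ j : ZMod Nh,
          (M (m+1) i j - ∑ k ∈ Finset.range (m+1), cF α (m+1) k * M k i j)) = 0 := by
        rcases mul_eq_zero.mp hDFsum with h | h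
        · exact absurd h (inv_ne_zero hρ.ne')
        · exact h
      simp only [Finset.sum_sub_distrib] at hsum0
      have hswap : (∑ i : ZMod Nh, ∑ j : ZMod Nh,
            ∑ k ∈ Finset.range (m+1), cF α (m+1) k * M k i j)
          = ∑ k ∈ Finset.range (m+1), cF α (m+1) k *
              ∑ i : ZMod Nh, ∑ j : ZMod Nh, M k i j := by
        have h1 : ∀ i : ZMod Nh,
            (∑ j : ZMod Nh, ∑ k ∈ Finset.range (m+1), cF α (m+1) k * M k i j)
            = ∑ k ∈ Finset.range (m+1), ∑ j : ZMod Nh, cF α (m+1) k * M k i j :=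
          fun i => Finset.sum_comm
        simp only [h1]
        rw [Finset.sum_comm]
        simp only [← Finset.mul_sum]
      rw [hswap] at hsum0
      have hconst : ∀ k ∈ Finset.range (m+1),
          cF α (m+1) k * (∑ i : ZMod Nh, ∑ j : ZMod Nh, M k i j)
          = cF α (m+1) k * ((hstep Nh)^2)⁻¹ := by
        intro k hk
        rw [hTk k (Nat.lt_succ_iff.mp (Finset.mem_range.mp hk))]
      rw [Finset.sum_congr rfl hconst, ← Finset.sum_mul, cF_sum hα m] at hsum0
      rw [inner2]
      simp only [mul_one]
      have hT' : (∑ i : ZMod Nh, ∑ j : ZMod Nh, M (m+1) i j) = ((hstep Nh)^2)⁻¹ := by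
        linarith [hsum0]
      rw [hT', mul_inv_cancel₀ hh2]
end
end

section
/- Existence and uniqueness for the stationary discrete Hamilton–Jacobi equation: Let g be a numerical Hamiltonian, continuous in q and satisfying (G1) (nonincreasing in q₁ and q₃, nondecreasing in q₂ and q₄). Then for every δ > 0 and every grid function V, there exists a unique grid function U such that δ·U_{i,j} − (Δ_hU)_{i,j} + g(x_{i,j}, [D_hU]_{i,j}) = V_{i,j} for all grid indices (i,j). -/
open Real Finset

noncomputable section

section HJaux

/-- the stationary HJ operator -/
def Fop (Nh : ℕ) (g : ZMod Nh → ZMod Nh → (Fin 4 → ℝ) → ℝ) (δ : ℝ) (U : GridFun Nh)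
    (i j : ZMod Nh) : ℝ :=
  δ * U i j - lapl Nh U i j + g i j (Dh Nh U i j)

lemma my_hstep_pos (Nh : ℕ) [NeZero Nh] : 0 < hstep Nh := by
  have : (0 : ℝ) < (Nh : ℝ) := by
    exact_mod_cast Nat.pos_of_ne_zero (NeZero.ne Nh)
  simpa [hstep] using inv_pos.mpr this

lemma my_div_mono {a b c : ℝ} (h : a ≤ b) (hc : 0 < c) : a / c ≤ b / c := by
  rw [div_eq_mul_inv, div_eq_mul_inv]
  exact mul_le_mul_of_nonneg_right h (inv_pos.mpr hc).le

/-- monotonicity of `g` from (G1) -/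
lemma my_gmono {g : (Fin 4 → ℝ) → ℝ} (hg : G1 g) {q q' : Fin 4 → ℝ}
    (h0 : q' 0 ≤ q 0) (h1 : q 1 ≤ q' 1) (h2 : q' 2 ≤ q 2) (h3 : q 3 ≤ q' 3) :
    g q ≤ g q' := by
  obtain ⟨A0, M1, A2, M3⟩ := hg
  set q1 : Fin 4 → ℝ := Function.update q 0 (q' 0) with hq1
  set q2 : Fin 4 → ℝ := Function.update q1 1 (q' 1) with hq2
  set q3' : Fin 4 → ℝ := Function.update q2 2 (q' 2) with hq3
  have e1 : g q ≤ g q1 := by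
    have := A0 q h0
    simpa [Function.update_eq_self] using this
  have e2 : g q1 ≤ g q2 := by
    have hco : q1 1 = q 1 := by
      rw [hq1]; exact Function.update_of_ne (by decide) _ _
    have := M1 q1 (show q1 1 ≤ q' 1 by rw [hco]; exact h1)
    simpa [Function.update_eq_self] using this
  have e3 : g q2 ≤ g q3' := by
    have hco : q2 2 = q 2 := by
      rw [hq2, hq1]
      rw [Function.update_of_ne (by decide), Function.update_of_ne (by decide)]
    have := A2 q2 (show q' 2 ≤ q2 2 by rw [hco]; exact h2)
    simpa [Function.update_eq_self] using this
  have e4 : g q3' ≤ g (Function.update q3' 3 (q' 3)) := by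
    have hco : q3' 3 = q 3 := by
      rw [hq3, hq2, hq1]
      rw [Function.update_of_ne (by decide), Function.update_of_ne (by decide),
        Function.update_of_ne (by decide)]
    have := M3 q3' (show q3' 3 ≤ q' 3 by rw [hco]; exact h3)
    simpa [Function.update_eq_self] using this
  have e5 : Function.update q3' 3 (q' 3) = q' := by
    funext k
    fin_cases k <;> simp [hq3, hq2, hq1, Function.update]
  calc g q ≤ g q1 := e1
    _ ≤ g q2 := e2
    _ ≤ g q3' := e3
    _ ≤ g (Function.update q3' 3 (q' 3)) := e4
    _ = g q' := by rw [e5]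

lemma my_Dh_apply (Nh : ℕ) (U : GridFun Nh) (i j : ZMod Nh) :
    Dh Nh U i j 0 = D1p Nh U i j ∧ Dh Nh U i j 1 = D1p Nh U (i - 1) j ∧
    Dh Nh U i j 2 = D2p Nh U i j ∧ Dh Nh U i j 3 = D2p Nh U i (j - 1) := by
  refine ⟨rfl, rfl, rfl, rfl⟩

/-- key lemma: off-diagonal antitonicity of the operator -/
lemma my_Fop_key (Nh : ℕ) [NeZero Nh] (g : ZMod Nh → ZMod Nh → (Fin 4 → ℝ) → ℝ)
    (hg1 : ∀ i j, G1 (g i j)) (δ : ℝ) (U W : GridFun Nh)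
    (hUW : ∀ a b, U a b ≤ W a b) (i j : ZMod Nh) (heq : U i j = W i j) :
    Fop Nh g δ W i j ≤ Fop Nh g δ U i j := by
  have hp := my_hstep_pos Nh
  have hg : g i j (Dh Nh W i j) ≤ g i j (Dh Nh U i j) := by
    apply my_gmono (hg1 i j)
    · show D1p Nh U i j ≤ D1p Nh W i j
      exact my_div_mono (by have := hUW (i + 1) j; linarith) hp
    · show D1p Nh W (i - 1) j ≤ D1p Nh U (i - 1) j
      have hi : i - 1 + 1 = i := sub_add_cancel i 1
      unfold D1p
      rw [hi]
      exact my_div_mono (by have := hUW (i - 1) j; linarith) hp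
    · show D2p Nh U i j ≤ D2p Nh W i j
      exact my_div_mono (by have := hUW i (j + 1); linarith) hp
    · show D2p Nh W i (j - 1) ≤ D2p Nh U i (j - 1)
      have hj : j - 1 + 1 = j := sub_add_cancel j 1
      unfold D2p
      rw [hj]
      exact my_div_mono (by have := hUW i (j - 1); linarith) hp
  have hl : lapl Nh U i j ≤ lapl Nh W i j := by
    unfold lapl
    apply my_div_mono _ (pow_pos hp 2)
    have h1 := hUW (i + 1) j
    have h2 := hUW (i - 1) j
    have h3 := hUW i (j + 1)
    have h4 := hUW i (j - 1)
    linarith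
  unfold Fop
  rw [heq]
  linarith

/-- shift invariance -/
lemma my_Fop_shift (Nh : ℕ) (g : ZMod Nh → ZMod Nh → (Fin 4 → ℝ) → ℝ) (δ t : ℝ)
    (W : GridFun Nh) (i j : ZMod Nh) :
    Fop Nh g δ (fun a b => W a b + t) i j = Fop Nh g δ W i j + δ * t := by
  have hD : Dh Nh (fun a b => W a b + t) i j = Dh Nh W i j := by
    funext k
    fin_cases k <;> simp [Dh, D1p, D2p]
  unfold Fop lapl
  rw [hD]
  ring

/-- comparison principle -/
lemma my_Fop_comp (Nh : ℕ) [NeZero Nh] (g : ZMod Nh → ZMod Nh → (Fin 4 → ℝ) → ℝ)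
    (hg1 : ∀ i j, G1 (g i j)) (δ : ℝ) (hδ : 0 < δ) (U W : GridFun Nh)
    (h : ∀ i j, Fop Nh g δ U i j ≤ Fop Nh g δ W i j) : ∀ i j, U i j ≤ W i j := by
  haveI : Nonempty (ZMod Nh) := ⟨0⟩
  obtain ⟨p, hp⟩ := Finite.exists_max (fun p : ZMod Nh × ZMod Nh => U p.1 p.2 - W p.1 p.2)
  set t := U p.1 p.2 - W p.1 p.2 with ht
  have hall : ∀ a b, U a b - W a b ≤ t := fun a b => hp (a, b)
  suffices hts : t ≤ 0 by
    intro i j; have := hall i j; linarith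
  by_contra hcon
  push_neg at hcon
  have key := my_Fop_key Nh g hg1 δ U (fun a b => W a b + t)
    (fun a b => by show U a b ≤ W a b + t; have := hall a b; linarith) p.1 p.2 (by rw [ht]; ring)
  rw [my_Fop_shift] at key
  have h2 := h p.1 p.2
  nlinarith

lemma my_Dh_const (Nh : ℕ) (c : ℝ) (i j : ZMod Nh) :
    Dh Nh (fun _ _ => c) i j = fun _ => 0 := by
  funext k
  fin_cases k <;> simp [Dh, D1p, D2p]

lemma my_Fop_const (Nh : ℕ) (g : ZMod Nh → ZMod Nh → (Fin 4 → ℝ) → ℝ) (δ c : ℝ)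
    (i j : ZMod Nh) :
    Fop Nh g δ (fun _ _ => c) i j = δ * c + g i j (fun _ => 0) := by
  unfold Fop lapl
  rw [my_Dh_const]
  ring

lemma my_cont_apply (Nh : ℕ) (a b : ZMod Nh) :
    Continuous fun U : GridFun Nh => U a b :=
  (continuous_apply b).comp (continuous_apply a)

lemma my_Fop_cont (Nh : ℕ) (g : ZMod Nh → ZMod Nh → (Fin 4 → ℝ) → ℝ)
    (hgc : ∀ i j, Continuous (g i j)) (δ : ℝ) (i j : ZMod Nh) :
    Continuous fun U : GridFun Nh => Fop Nh g δ U i j := by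
  have hD1 : ∀ a b, Continuous fun U : GridFun Nh => D1p Nh U a b := fun a b =>
    ((my_cont_apply Nh _ _).sub (my_cont_apply Nh _ _)).div_const _
  have hD2 : ∀ a b, Continuous fun U : GridFun Nh => D2p Nh U a b := fun a b =>
    ((my_cont_apply Nh _ _).sub (my_cont_apply Nh _ _)).div_const _
  have hDh : Continuous fun U : GridFun Nh => Dh Nh U i j := by
    apply continuous_pi
    intro k
    fin_cases k
    · exact hD1 i j
    · exact hD1 (i - 1) j
    · exact hD2 i j
    · exact hD2 i (j - 1)
  have hlapl : Continuous fun U : GridFun Nh => lapl Nh U i j := by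
    unfold lapl
    apply Continuous.div_const
    apply Continuous.neg
    exact (((((continuous_const.mul (my_cont_apply Nh i j)).sub
      (my_cont_apply Nh (i + 1) j)).sub (my_cont_apply Nh (i - 1) j)).sub
      (my_cont_apply Nh i (j + 1))).sub (my_cont_apply Nh i (j - 1)))
  unfold Fop
  exact ((continuous_const.mul (my_cont_apply Nh i j)).sub hlapl).add ((hgc i j).comp hDh)

end HJaux

/-- Existence and uniqueness for the stationary discrete Hamilton-Jacobi equation. -/
theorem stationary_HJ_existence_uniqueness (Nh : ℕ) [NeZero Nh]
    (g : ZMod Nh → ZMod Nh → (Fin 4 → ℝ) → ℝ)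
    (hgc : ∀ i j, Continuous (g i j)) (hg1 : ∀ i j, G1 (g i j))
    (δ : ℝ) (hδ : 0 < δ) (V : GridFun Nh) :
    ∃! U : GridFun Nh, ∀ i j,
      δ * U i j - lapl Nh U i j + g i j (Dh Nh U i j) = V i j := by
  classical
  haveI : Nonempty (ZMod Nh) := ⟨0⟩
  -- constants
  obtain ⟨pC, hpC⟩ := Finite.exists_max
    (fun p : ZMod Nh × ZMod Nh => (V p.1 p.2 - g p.1 p.2 (fun _ => 0)) / δ)
  obtain ⟨pc, hpc⟩ := Finite.exists_min
    (fun p : ZMod Nh × ZMod Nh => (V p.1 p.2 - g p.1 p.2 (fun _ => 0)) / δ)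
  set C : ℝ := (V pC.1 pC.2 - g pC.1 pC.2 (fun _ => 0)) / δ with hCdef
  set c : ℝ := (V pc.1 pc.2 - g pc.1 pc.2 (fun _ => 0)) / δ with hcdef
  have hCge : ∀ i j, V i j ≤ Fop Nh g δ (fun _ _ => C) i j := by
    intro i j
    rw [my_Fop_const]
    have h1 := hpC (i, j)
    rw [div_le_iff₀ hδ] at h1
    nlinarith
  have hcle : ∀ i j, Fop Nh g δ (fun _ _ => c) i j ≤ V i j := by
    intro i j
    rw [my_Fop_const]
    have h1 := hpc (i, j)
    rw [le_div_iff₀ hδ] at h1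
    nlinarith
  -- the set of subsolutions above the constant c
  set S : Set (GridFun Nh) :=
    {W | (∀ i j, Fop Nh g δ W i j ≤ V i j) ∧ ∀ i j, c ≤ W i j} with hSdef
  have hSne : S.Nonempty := ⟨fun _ _ => c, fun i j => hcle i j, fun i j => le_refl c⟩
  have hSub : ∀ W ∈ S, ∀ i j, W i j ≤ C := by
    intro W hW
    apply my_Fop_comp Nh g hg1 δ hδ
    intro i j
    exact le_trans (hW.1 i j) (hCge i j)
  have hSclosed : IsClosed S := by
    have : S = (⋂ i, ⋂ j, {W : GridFun Nh | Fop Nh g δ W i j ≤ V i j}) ∩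
        ⋂ i, ⋂ j, {W : GridFun Nh | c ≤ W i j} := by
      ext W; simp [hSdef, Set.mem_iInter]
    rw [this]
    exact IsClosed.inter
      (isClosed_iInter fun i => isClosed_iInter fun j =>
        isClosed_le (my_Fop_cont Nh g hgc δ i j) continuous_const)
      (isClosed_iInter fun i => isClosed_iInter fun j =>
        isClosed_le continuous_const (my_cont_apply Nh i j))
  have hK : IsCompact (Set.pi Set.univ fun _ : ZMod Nh =>
      Set.pi Set.univ fun _ : ZMod Nh => Set.Icc c C) :=
    isCompact_univ_pi fun _ => isCompact_univ_pi fun _ => isCompact_Icc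
  have hScomp : IsCompact S := by
    apply IsCompact.of_isClosed_subset hK hSclosed
    intro W hW
    rw [Set.mem_pi]
    intro i _
    rw [Set.mem_pi]
    intro j _
    exact ⟨hW.2 i j, hSub W hW i j⟩
  have hφ : Continuous fun W : GridFun Nh => ∑ a : ZMod Nh, ∑ b : ZMod Nh, W a b :=
    continuous_finset_sum _ fun a _ => continuous_finset_sum _ fun b _ => my_cont_apply Nh a b
  obtain ⟨U, hUS, hUmax⟩ := hScomp.exists_isMaxOn hSne hφ.continuousOn
  obtain ⟨hU1, hU2⟩ := hUS
  have hsol : ∀ i j, Fop Nh g δ U i j = V i j := by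
    intro i j
    refine le_antisymm (hU1 i j) ?_
    by_contra hcon
    push_neg at hcon
    -- bump argument
    set e : ℝ → GridFun Nh := fun ε a b => U a b + if (a, b) = (i, j) then ε else 0 with he
    have hecont : Continuous e := by
      apply continuous_pi; intro a; apply continuous_pi; intro b
      by_cases hab : (a, b) = (i, j) <;> simp only [he, hab, if_true, if_false] <;> fun_prop
    have he0 : e 0 = U := by funext a b; simp [he]
    have hc2 : Continuous fun ε => Fop Nh g δ (e ε) i j :=
      (my_Fop_cont Nh g hgc δ i j).comp hecont
    have hopen : IsOpen {ε : ℝ | Fop Nh g δ (e ε) i j < V i j} :=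
      isOpen_lt hc2 continuous_const
    have h0mem : (0 : ℝ) ∈ {ε : ℝ | Fop Nh g δ (e ε) i j < V i j} := by
      simp only [Set.mem_setOf_eq, he0]; exact hcon
    obtain ⟨r, hr, hball⟩ := Metric.isOpen_iff.mp hopen 0 h0mem
    set ε := r / 2 with hε
    have hεpos : 0 < ε := by positivity
    have hεmem : Fop Nh g δ (e ε) i j < V i j := by
      apply hball
      simp only [Metric.mem_ball, Real.dist_eq, sub_zero, hε]
      rw [abs_of_pos hεpos]
      linarith
    have hle : ∀ a b, U a b ≤ e ε a b := by
      intro a b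
      by_cases hab : (a, b) = (i, j) <;> simp only [he, hab, if_true, if_false]
      · linarith
      · simp
    have hmem : e ε ∈ S := by
      constructor
      · intro a b
        by_cases hab : (a, b) = (i, j)
        · have ha : a = i := congrArg Prod.fst hab
          have hb : b = j := congrArg Prod.snd hab
          subst ha; subst hb
          exact hεmem.le
        · have heqab : e ε a b = U a b := by
            show U a b + (if (a, b) = (i, j) then ε else 0) = U a b
            rw [if_neg hab, add_zero]
          exact le_trans (my_Fop_key Nh g hg1 δ U (e ε) hle a b heqab.symm) (hU1 a b)
      · intro a b
        exact le_trans (hU2 a b) (hle a b)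
    have hsum : (∑ a : ZMod Nh, ∑ b : ZMod Nh, e ε a b)
        = (∑ a : ZMod Nh, ∑ b : ZMod Nh, U a b) + ε := by
      have hrow : ∀ a : ZMod Nh, (∑ b : ZMod Nh, e ε a b)
          = (∑ b : ZMod Nh, U a b) + (if a = i then ε else 0) := by
        intro a
        rw [show (∑ b : ZMod Nh, e ε a b)
            = ∑ b : ZMod Nh, (U a b + if (a, b) = (i, j) then ε else 0) from rfl,
          Finset.sum_add_distrib]
        congr 1
        by_cases ha : a = i
        · subst ha
          simp [Prod.ext_iff]
        · simp [Prod.ext_iff, ha]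
      rw [Finset.sum_congr rfl fun a _ => hrow a, Finset.sum_add_distrib]
      simp
    have hmax := hUmax hmem
    simp only [Set.mem_setOf_eq] at hmax
    rw [hsum] at hmax
    linarith
  refine ⟨U, hsol, ?_⟩
  intro W hW
  funext a b
  have hWF : ∀ i j, Fop Nh g δ W i j = V i j := hW
  exact le_antisymm
    (my_Fop_comp Nh g hg1 δ hδ W U (fun i j => by rw [hWF i j, hsol i j]) a b)
    (my_Fop_comp Nh g hg1 δ hδ U W (fun i j => by rw [hWF i j, hsol i j]) a b)
end
end
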